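/- arXiv:1910.04789 — 2 statements merged into one kernel-verified Lean document; each statement's English description precedes it below -/
import Mathlib

section
/- Let M be defined on n×n real matrices entrywise by M(A)_{ij} = A_{ij} for i < j, M(A)_{ij} = −A_{ji} for i > j, and M(A)_{ii} = 0. Then for all symmetric n×n real matrices X and Y (Xᵀ = X, Yᵀ = Y), one has ⁅X,Y⁆ = M(⁅M(X), Y⁆) + M(⁅X, M(Y)⁆) − ⁅M(X), M(Y)⁆, where ⁅A,B⁆ = AB − BA. -/
open Matrix

/-- The Toda projection: `M(A)_{ij} = A_{ij}` for `i < j`, `M(A)_{ij} = -A_{ji}` for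
`i > j`, and `M(A)_{ii} = 0`. -/
def todaProj {n : ℕ} (A : Matrix (Fin n) (Fin n) ℝ) : Matrix (Fin n) (Fin n) ℝ :=
  Matrix.of fun i j => if i < j then A i j else if j < i then -A j i else 0

lemma todaProj_skew {n : ℕ} (A : Matrix (Fin n) (Fin n) ℝ) :
    (todaProj A)ᵀ = -(todaProj A) := by
  ext i j
  simp only [transpose_apply, neg_apply, todaProj, of_apply]
  rcases lt_trichotomy i j with h | h | h
  · simp [h, not_lt.2 h.le, h.ne']
  · simp [h]
  · simp [h, not_lt.2 h.le, h.ne']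

lemma todaProj_apply_of_lt {n : ℕ} (A : Matrix (Fin n) (Fin n) ℝ) {i j : Fin n}
    (h : i < j) : todaProj A i j = A i j := by
  simp [todaProj, h]

lemma skew_ext {n : ℕ} {A B : Matrix (Fin n) (Fin n) ℝ}
    (hA : Aᵀ = -A) (hB : Bᵀ = -B)
    (h : ∀ i j : Fin n, i < j → A i j = B i j) : A = B := by
  ext i j
  rcases lt_trichotomy i j with hij | hij | hij
  · exact h i j hij
  · subst hij
    have hA' : A i i = -A i i := by
      conv_lhs => rw [← transpose_apply A i i, hA]
      simp
    have hB' : B i i = -B i i := by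
      conv_lhs => rw [← transpose_apply B i i, hB]
      simp
    have : A i i = 0 := by linarith
    have : B i i = 0 := by linarith
    simp_all
  · have hAij : A i j = -A j i := by
      conv_lhs => rw [← transpose_apply A j i, hA]
      simp
    have hBij : B i j = -B j i := by
      conv_lhs => rw [← transpose_apply B j i, hB]
      simp
    rw [hAij, hBij, h j i hij]

/-- For symmetric matrices `X`, `Y` one has
`⁅X,Y⁆ = M⁅M(X),Y⁆ + M⁅X,M(Y)⁆ - ⁅M(X),M(Y)⁆`, where `⁅A,B⁆ = A*B - B*A` and
`M` is the Toda projection. -/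
theorem todaProj_bracket_symmetric {n : ℕ} (X Y : Matrix (Fin n) (Fin n) ℝ)
    (hX : Xᵀ = X) (hY : Yᵀ = Y) :
    X * Y - Y * X =
      todaProj (todaProj X * Y - Y * todaProj X)
        + todaProj (X * todaProj Y - todaProj Y * X)
        - (todaProj X * todaProj Y - todaProj Y * todaProj X) := by
  set P := todaProj X with hP
  set Q := todaProj Y with hQ
  have hPs : Pᵀ = -P := todaProj_skew X
  have hQs : Qᵀ = -Q := todaProj_skew Y
  -- both sides are skew-symmetric
  have hL : (X * Y - Y * X)ᵀ = -(X * Y - Y * X) := by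
    rw [transpose_sub, transpose_mul, transpose_mul, hX, hY]; abel
  have hR : (todaProj (P * Y - Y * P) + todaProj (X * Q - Q * X)
      - (P * Q - Q * P))ᵀ
      = -(todaProj (P * Y - Y * P) + todaProj (X * Q - Q * X)
      - (P * Q - Q * P)) := by
    rw [transpose_sub, transpose_add, todaProj_skew, todaProj_skew,
      transpose_sub, transpose_mul, transpose_mul, hPs, hQs]
    simp only [neg_mul, mul_neg, neg_neg, neg_sub]
    abel
  refine skew_ext hL hR (fun i j hij => ?_)
  simp only [add_sub_assoc, Matrix.add_apply, Matrix.sub_apply, todaProj_apply_of_lt _ hij]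
  -- ring identity: [P,Y] + [X,Q] - [P,Q] = [X,Y] - [K,K'] with K = X - P, K' = Y - Q
  have key : (P * Y - Y * P) + ((X * Q - Q * X) - (P * Q - Q * P))
      = (X * Y - Y * X) - ((X - P) * (Y - Q) - (Y - Q) * (X - P)) := by
    noncomm_ring
  have hK : ∀ k : Fin n, ((X - P) * (Y - Q) - (Y - Q) * (X - P)) i j = 0 := by
    intro _
    have hXP : ∀ a b : Fin n, a < b → (X - P) a b = 0 := by
      intro a b hab
      simp [hP, Matrix.sub_apply, todaProj_apply_of_lt _ hab]
    have hYQ : ∀ a b : Fin n, a < b → (Y - Q) a b = 0 := by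
      intro a b hab
      simp [hQ, Matrix.sub_apply, todaProj_apply_of_lt _ hab]
    rw [Matrix.sub_apply, mul_apply, mul_apply]
    rw [Finset.sum_eq_zero, Finset.sum_eq_zero, sub_zero]
    · intro k _
      rcases lt_or_ge i k with hk | hk
      · rw [hYQ i k hk, zero_mul]
      · rw [hXP k j (lt_of_le_of_lt hk hij), mul_zero]
    · intro k _
      rcases lt_or_ge i k with hk | hk
      · rw [hXP i k hk, zero_mul]
      · rw [hYQ k j (lt_of_le_of_lt hk hij), mul_zero]
  have := congrArg (fun M : Matrix (Fin n) (Fin n) ℝ => M i j) key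
  simp only [Matrix.add_apply, Matrix.sub_apply] at this
  have h0 := hK i
  simp only [Matrix.sub_apply] at h0
  linarith
end

section
/- Let L : ℝ → Matrix (Fin n) (Fin n) ℝ be a solution of the full symmetric Toda equation: for every t, L'(t) = ⁅M(L(t)), L(t)⁆ (in the sense of HasDerivAt). Then for every natural number m, the Flaschka integral t ↦ trace((L(t))^m) is constant: trace((L(t))^m) = trace((L(0))^m) for all t. -/
open Matrix

attribute [local instance] Matrix.normedAddCommGroup Matrix.normedSpace

private noncomputable def mulCLM {n : ℕ} :
    Matrix (Fin n) (Fin n) ℝ →L[ℝ] Matrix (Fin n) (Fin n) ℝ →L[ℝ] Matrix (Fin n) (Fin n) ℝ :=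
  LinearMap.toContinuousLinearMap
    ((LinearMap.toContinuousLinearMap : (Matrix (Fin n) (Fin n) ℝ →ₗ[ℝ] _) ≃ₗ[ℝ] _).toLinearMap
      ∘ₗ LinearMap.mul ℝ (Matrix (Fin n) (Fin n) ℝ))

private lemma hasDerivAt_matmul {n : ℕ} {f g : ℝ → Matrix (Fin n) (Fin n) ℝ}
    {f' g' : Matrix (Fin n) (Fin n) ℝ} {x : ℝ} (hf : HasDerivAt f f' x)
    (hg : HasDerivAt g g' x) :
    HasDerivAt (fun t => f t * g t) (f' * g x + f x * g') x := by
  have h := ((mulCLM (n := n)).isBoundedBilinearMap.hasFDerivAt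
      (f x, g x)).comp_hasDerivAt x (hf.prodMk hg)
  have e : ∀ A B : Matrix (Fin n) (Fin n) ℝ, mulCLM A B = A * B := by
    intro A B
    simp [mulCLM]
  have h2 : HasDerivAt (fun t => mulCLM (f t) (g t)) (mulCLM f' (g x) + mulCLM (f x) g') x := by
    simp [Function.comp_def, add_comm] at h
    exact h
  simp only [e] at h2
  exact h2

/-- Along any solution of the full symmetric Toda equation `L' = ⁅M(L), L⁆`, each
Flaschka integral `t ↦ trace((L(t))^m)` is constant. -/
theorem flaschka_integrals_constant {n : ℕ} (L : ℝ → Matrix (Fin n) (Fin n) ℝ)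
    (hL : ∀ t, HasDerivAt L (todaProj (L t) * L t - L t * todaProj (L t)) t) :
    ∀ (m : ℕ) (t : ℝ), ((L t) ^ m).trace = ((L 0) ^ m).trace := by
  have hpow : ∀ (m : ℕ) (t : ℝ), HasDerivAt (fun s => L s ^ m)
      (todaProj (L t) * L t ^ m - L t ^ m * todaProj (L t)) t := by
    intro m
    induction m with
    | zero =>
      intro t
      simp only [pow_zero, mul_one, one_mul, sub_self]
      exact hasDerivAt_const t 1
    | succ k ih =>
      intro t
      have h := hasDerivAt_matmul (hL t) (ih t)
      simp only [pow_succ'] at h ⊢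
      convert h using 1
      noncomm_ring
  intro m t
  have hder : ∀ s : ℝ, HasDerivAt (fun u => ((L u) ^ m).trace) 0 s := by
    intro s
    have htr : HasDerivAt (fun u => ((L u) ^ m).trace)
        ((todaProj (L s) * L s ^ m - L s ^ m * todaProj (L s)).trace) s := by
      have := (LinearMap.toContinuousLinearMap
        (Matrix.traceLinearMap (Fin n) ℝ ℝ)).hasFDerivAt.comp_hasDerivAt s (hpow m s)
      exact this
    have : (todaProj (L s) * L s ^ m - L s ^ m * todaProj (L s)).trace = 0 := by
      rw [Matrix.trace_sub, Matrix.trace_mul_comm, sub_self]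
    rwa [this] at htr
  exact is_const_of_deriv_eq_zero (f := fun u => ((L u) ^ m).trace)
    (fun s => (hder s).differentiableAt) (fun s => (hder s).deriv) t 0
end
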